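/- Let A ∈ ℝ^{m×m} be diagonal with positive diagonal entries a₁,…,a_m and g(x) = ⟨1, x⟩. For any Δ > 0, define b(D_d) = Δd for d ∈ ℤ^m, where D_d ∼ D_{d'} iff ||d − d'||₁ ≤ 1. Then for any ε > 0 and δ ∈ (0, 1/2], every (ε, δ)-DP mechanism μ satisfying A·μ(D_d) ≤ b(D_d) with probability 1 has expected suboptimality gap max{g(x) : Ax ≤ b(D_d)} − E[g(μ(D_d))] ≥ (Δ/(4ε))·(∑_{i=1}^m 1/a_i)·ln((e^ε − 1)/(2δ) + 1). -/

import Mathlib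

open MeasureTheory

open Finset in
lemma aux_sum_ind_le (K : ℕ) (t : ℝ) (ht : 0 ≤ t) :
    ∑ k ∈ Finset.Icc 1 K, (if (k:ℝ) ≤ t then (1:ℝ) else 0) ≤ t := by
  classical
  rw [Finset.sum_boole]
  have hsub : ((Finset.Icc 1 K).filter (fun k : ℕ => (k:ℝ) ≤ t)) ⊆ Finset.Icc 1 (Nat.floor t) := by
    intro k hk
    simp only [Finset.mem_filter, Finset.mem_Icc] at hk ⊢
    exact ⟨hk.1.1, Nat.le_floor hk.2⟩
  have h1 : ((Finset.Icc 1 K).filter (fun k : ℕ => (k:ℝ) ≤ t)).card ≤ Nat.floor t := by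
    simpa [Nat.card_Icc] using Finset.card_le_card hsub
  calc (((Finset.Icc 1 K).filter (fun k : ℕ => (k:ℝ) ≤ t)).card : ℝ) ≤ (Nat.floor t : ℝ) := by
        exact_mod_cast h1
    _ ≤ t := Nat.floor_le ht


/-- Lower bound theorem: Let `A` be diagonal with positive entries
`a₁,…,a_m`, `g(x) = ⟨1, x⟩`, and `b(D_d) = Δd`. Every `(ε, δ)`-DP mechanism `μ`
satisfying `A μ(D_d) ≤ b(D_d)` with probability 1 has expected suboptimality gap at
least `(Δ/(4ε))·(∑_i 1/a_i)·ln((e^ε − 1)/(2δ) + 1)`; here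
`max{g(x) : Ax ≤ Δd} = Δ·∑_i d_i/a_i`. -/
theorem dp_lower_bound
    {m : ℕ} (Δ ε δ : ℝ) (hΔ : 0 < Δ) (hε : 0 < ε) (hδ0 : 0 < δ) (hδ : δ ≤ 1 / 2)
    (a : Fin m → ℝ) (ha : ∀ i, 0 < a i)
    (μ : (Fin m → ℤ) → Measure (Fin m → ℝ))
    (hprob : ∀ d, IsProbabilityMeasure (μ d))
    (hDP : ∀ d d' : Fin m → ℤ, (∑ i, |d i - d' i|) ≤ 1 →
      ∀ V : Set (Fin m → ℝ), MeasurableSet V →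
        μ d V ≤ ENNReal.ofReal (Real.exp ε) * μ d' V + ENNReal.ofReal δ)
    (hsupp : ∀ d, μ d {x | ∀ i, a i * x i ≤ Δ * (d i : ℝ)} = 1)
    (hint : ∀ d, Integrable (fun x : Fin m → ℝ => ∑ i, x i) (μ d)) :
    ∀ d : Fin m → ℤ,
      Δ * (∑ i, (d i : ℝ) / a i) - (∫ x, (∑ i, x i) ∂μ d) ≥
        Δ / (4 * ε) * (∑ i, 1 / a i) * Real.log ((Real.exp ε - 1) / (2 * δ) + 1) := by
  intro d
  classical
  set R : ℝ := (Real.exp ε - 1) / (2 * δ) + 1 with hRdef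
  set K : ℕ := Nat.floor (Real.log R / ε) with hKdef
  have hr1 : (1:ℝ) < Real.exp ε := by
    rw [show (1:ℝ) = Real.exp 0 by simp]
    exact Real.exp_lt_exp.mpr hε
  have hRge : Real.exp ε ≤ R := by
    have h1 : Real.exp ε - 1 ≤ (Real.exp ε - 1) / (2 * δ) := by
      rw [le_div_iff₀ (by linarith)]
      nlinarith
    simp only [hRdef]; linarith
  have hRpos : 0 < R := lt_of_lt_of_le (lt_trans one_pos hr1) hRge
  have hLge : ε ≤ Real.log R := by
    calc ε = Real.log (Real.exp ε) := (Real.log_exp ε).symm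
      _ ≤ Real.log R := Real.log_le_log (Real.exp_pos ε) hRge
  have hK1 : 1 ≤ K := by
    apply Nat.le_floor
    rw [Nat.cast_one, le_div_iff₀ hε]
    linarith
  have hKup : (K:ℝ) * ε ≤ Real.log R := by
    have := Nat.floor_le (show 0 ≤ Real.log R / ε from div_nonneg (by linarith) hε.le)
    calc (K:ℝ) * ε ≤ (Real.log R / ε) * ε := by
          apply mul_le_mul_of_nonneg_right _ hε.le
          simpa [hKdef] using this
      _ = Real.log R := by field_simp
  have hKlow : Real.log R / (2 * ε) ≤ (K:ℝ) := by
    rcases le_or_gt (Real.log R / ε) 2 with h | h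
    · calc Real.log R / (2 * ε) = (Real.log R / ε) / 2 := by ring
        _ ≤ 1 := by linarith
        _ ≤ (K:ℝ) := by exact_mod_cast hK1
    · have h2 : Real.log R / ε < (K:ℝ) + 1 := Nat.lt_floor_add_one _
      have : Real.log R / (2 * ε) = (Real.log R / ε) / 2 := by ring
      linarith
  -- measurability facts
  have hEmeas : ∀ (i : Fin m) (c : ℝ), MeasurableSet {x : Fin m → ℝ | a i * x i ≤ c} := by
    intro i c
    exact measurableSet_le (by fun_prop) measurable_const
  have hSmeas : ∀ d' : Fin m → ℤ,
      MeasurableSet {x : Fin m → ℝ | ∀ i, a i * x i ≤ Δ * (d' i : ℝ)} := by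
    intro d'
    have : {x : Fin m → ℝ | ∀ i, a i * x i ≤ Δ * (d' i : ℝ)}
        = ⋂ i, {x : Fin m → ℝ | a i * x i ≤ Δ * (d' i : ℝ)} := by
      ext x; simp [Set.mem_iInter]
    rw [this]
    exact MeasurableSet.iInter (fun i => hEmeas i _)
  -- group privacy
  have hgroup : ∀ (i : Fin m) (k : ℕ) (V : Set (Fin m → ℝ)), MeasurableSet V →
      μ d V ≤ ENNReal.ofReal (Real.exp ε ^ k) *
          μ (fun j => if j = i then d i - (k:ℤ) else d j) V
        + ENNReal.ofReal (δ * ∑ j ∈ Finset.range k, Real.exp ε ^ j) := by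
    intro i k
    induction k with
    | zero =>
        intro V hV
        have hd : (fun j => if j = i then d i - ((0:ℕ):ℤ) else d j) = d := by
          funext j; by_cases h : j = i <;> simp [h]
        rw [hd]; simp
    | succ k ih =>
        intro V hV
        have hterm : ∀ j : Fin m, |(if j = i then d i - (k:ℤ) else d j)
            - (if j = i then d i - ((k+1:ℕ):ℤ) else d j)| = if j = i then 1 else 0 := by
          intro j; by_cases h : j = i <;> simp [h]
        have hsum : (∑ j, |(fun j => if j = i then d i - (k:ℤ) else d j) j
            - (fun j => if j = i then d i - ((k+1:ℕ):ℤ) else d j) j|) ≤ 1 := by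
          refine le_of_eq ?_
          calc (∑ j, |(fun j => if j = i then d i - (k:ℤ) else d j) j
                - (fun j => if j = i then d i - ((k+1:ℕ):ℤ) else d j) j|)
              = ∑ j : Fin m, (if j = i then (1:ℤ) else 0) :=
                Finset.sum_congr rfl (fun j _ => hterm j)
            _ = 1 := by simp
        have h2 := hDP _ _ hsum V hV
        have hr : (0:ℝ) ≤ Real.exp ε ^ k := by positivity
        calc μ d V ≤ ENNReal.ofReal (Real.exp ε ^ k) *
                μ (fun j => if j = i then d i - (k:ℤ) else d j) V
              + ENNReal.ofReal (δ * ∑ j ∈ Finset.range k, Real.exp ε ^ j) := ih V hV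
          _ ≤ ENNReal.ofReal (Real.exp ε ^ k) *
                (ENNReal.ofReal (Real.exp ε) *
                  μ (fun j => if j = i then d i - ((k+1:ℕ):ℤ) else d j) V + ENNReal.ofReal δ)
              + ENNReal.ofReal (δ * ∑ j ∈ Finset.range k, Real.exp ε ^ j) := by gcongr
          _ = ENNReal.ofReal (Real.exp ε ^ (k+1)) *
                μ (fun j => if j = i then d i - ((k+1:ℕ):ℤ) else d j) V
              + ENNReal.ofReal (δ * ∑ j ∈ Finset.range (k+1), Real.exp ε ^ j) := by
                rw [mul_add, ← mul_assoc, ← ENNReal.ofReal_mul hr, ← ENNReal.ofReal_mul hr,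
                  Finset.sum_range_succ, add_assoc,
                  ← ENNReal.ofReal_add (by positivity) (by positivity)]
                congr 1
                exact congrArg ENNReal.ofReal (by ring)
  -- tail probability bound
  have htail : ∀ (i : Fin m) (k : ℕ), k ≤ K →
      (1:ℝ)/2 ≤ (μ d {x | a i * x i ≤ Δ * ((d i : ℝ) - k)}).toReal := by
    intro i k hkK
    set E : Set (Fin m → ℝ) := {x | a i * x i ≤ Δ * ((d i : ℝ) - k)} with hEdef
    have hE : MeasurableSet E := hEmeas i _
    -- μ (d shifted) Eᶜ = 0
    have hz : μ (fun j => if j = i then d i - (k:ℤ) else d j) Eᶜ = 0 := by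
      set d' : Fin m → ℤ := fun j => if j = i then d i - (k:ℤ) else d j with hd'
      have h1 := hsupp d'
      have : IsProbabilityMeasure (μ d') := hprob d'
      have hcompl : μ d' {x | ∀ j, a j * x j ≤ Δ * (d' j : ℝ)}ᶜ = 0 := by
        rw [measure_compl (hSmeas d') (measure_ne_top _ _), h1, measure_univ]
        simp
      apply measure_mono_null _ hcompl
      intro x hx hmem
      apply hx
      have := hmem i
      simp only [hd', if_pos rfl] at this
      push_cast at this
      simpa [hEdef] using this
    have hgs : δ * ∑ j ∈ Finset.range k, Real.exp ε ^ j ≤ 1/2 := by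
      rw [geom_sum_eq (ne_of_gt hr1)]
      have hek : Real.exp ε ^ k ≤ R := by
        rw [← Real.exp_nat_mul]
        calc Real.exp ((k:ℝ) * ε) ≤ Real.exp (Real.log R) := by
              apply Real.exp_le_exp.mpr
              calc (k:ℝ) * ε ≤ (K:ℝ) * ε := by
                    apply mul_le_mul_of_nonneg_right _ hε.le
                    exact_mod_cast hkK
                _ ≤ Real.log R := hKup
          _ = R := Real.exp_log hRpos
      have hnum : δ * (Real.exp ε ^ k - 1) ≤ (Real.exp ε - 1) / 2 := by
        have h3 : Real.exp ε ^ k - 1 ≤ (Real.exp ε - 1) / (2 * δ) := by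
          simp only [hRdef] at hek; linarith
        have h4 : δ * (Real.exp ε ^ k - 1) ≤ δ * ((Real.exp ε - 1) / (2 * δ)) :=
          mul_le_mul_of_nonneg_left h3 hδ0.le
        calc δ * (Real.exp ε ^ k - 1) ≤ δ * ((Real.exp ε - 1) / (2 * δ)) := h4
          _ = (Real.exp ε - 1) / 2 := by field_simp
      rw [mul_div_assoc']
      rw [div_le_iff₀ (by linarith)]
      linarith
    have hub : μ d Eᶜ ≤ ENNReal.ofReal (1/2) := by
      calc μ d Eᶜ ≤ ENNReal.ofReal (Real.exp ε ^ k) *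
              μ (fun j => if j = i then d i - (k:ℤ) else d j) Eᶜ
            + ENNReal.ofReal (δ * ∑ j ∈ Finset.range k, Real.exp ε ^ j) :=
              hgroup i k Eᶜ hE.compl
        _ = ENNReal.ofReal (δ * ∑ j ∈ Finset.range k, Real.exp ε ^ j) := by rw [hz]; simp
        _ ≤ ENNReal.ofReal (1/2) := ENNReal.ofReal_le_ofReal hgs
    -- conclude
    have : IsProbabilityMeasure (μ d) := hprob d
    have h1 : (1:ENNReal) ≤ μ d E + ENNReal.ofReal (1/2) := by
      calc (1:ENNReal) = μ d Set.univ := (measure_univ).symm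
        _ = μ d (E ∪ Eᶜ) := by rw [Set.union_compl_self]
        _ ≤ μ d E + μ d Eᶜ := measure_union_le _ _
        _ ≤ μ d E + ENNReal.ofReal (1/2) := by gcongr
    have h2 : ENNReal.ofReal (1/2) ≤ μ d E := by
      have hhalf : (1:ENNReal) = ENNReal.ofReal (1/2) + ENNReal.ofReal (1/2) := by
        rw [← ENNReal.ofReal_add (by norm_num) (by norm_num)]; norm_num
      rw [hhalf] at h1
      exact (ENNReal.add_le_add_iff_left (by simp : (ENNReal.ofReal (1/2)) ≠ ⊤)).mp
        (by simpa [add_comm] using h1)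
    calc (1:ℝ)/2 = (ENNReal.ofReal (1/2)).toReal := by rw [ENNReal.toReal_ofReal]; norm_num
      _ ≤ (μ d E).toReal := ENNReal.toReal_mono (measure_ne_top _ _) h2
  -- the lower-bound simple function
  set f : (Fin m → ℝ) → ℝ := fun x => ∑ i, (Δ / a i) *
      ∑ k ∈ Finset.Icc 1 K, (if a i * x i ≤ Δ * ((d i : ℝ) - k) then (1:ℝ) else 0) with hfdef
  have hprobd : IsProbabilityMeasure (μ d) := hprob d
  have hind_eq : ∀ (i : Fin m) (c : ℝ), (fun x : Fin m → ℝ => if a i * x i ≤ c then (1:ℝ) else 0)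
      = Set.indicator {x : Fin m → ℝ | a i * x i ≤ c} (fun _ => (1:ℝ)) := by
    intro i c; funext x
    simp [Set.indicator_apply, Set.mem_setOf_eq]
  have hind_int : ∀ (i : Fin m) (c : ℝ),
      Integrable (fun x : Fin m → ℝ => if a i * x i ≤ c then (1:ℝ) else 0) (μ d) := by
    intro i c
    rw [hind_eq]
    exact (integrable_const 1).indicator (hEmeas i c)
  have hterm_int : ∀ i : Fin m, Integrable (fun x : Fin m → ℝ =>
      (Δ / a i) * ∑ k ∈ Finset.Icc 1 K,
        (if a i * x i ≤ Δ * ((d i : ℝ) - k) then (1:ℝ) else 0)) (μ d) := by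
    intro i
    exact (integrable_finset_sum _ (fun k _ => hind_int i _)).const_mul _
  have hf_int : Integrable f (μ d) := integrable_finset_sum _ (fun i _ => hterm_int i)
  have hintf : ∫ x, f x ∂ μ d
      = ∑ i, (Δ / a i) * ∑ k ∈ Finset.Icc 1 K,
          (μ d {x | a i * x i ≤ Δ * ((d i : ℝ) - k)}).toReal := by
    rw [hfdef, integral_finset_sum _ (fun i _ => hterm_int i)]
    refine Finset.sum_congr rfl (fun i _ => ?_)
    rw [integral_const_mul]
    congr 1
    rw [integral_finset_sum _ (fun k _ => hind_int i _)]
    refine Finset.sum_congr rfl (fun k _ => ?_)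
    rw [hind_eq i _, integral_indicator_const _ (hEmeas i _)]
    simp [Measure.real]
  -- lower bound on ∫ f
  have hflb : Δ / (4 * ε) * (∑ i, 1 / a i) * Real.log R ≤ ∫ x, f x ∂ μ d := by
    rw [hintf]
    have hrepr : Δ / (4 * ε) * (∑ i, 1 / a i) * Real.log R
        = ∑ i : Fin m, (Δ / a i) * (Real.log R / (4 * ε)) := by
      rw [Finset.mul_sum, Finset.sum_mul]
      exact Finset.sum_congr rfl (fun i _ => by ring)
    rw [hrepr]
    apply Finset.sum_le_sum
    intro i _
    apply mul_le_mul_of_nonneg_left _ (div_nonneg hΔ.le (ha i).le)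
    calc Real.log R / (4 * ε) = (Real.log R / (2 * ε)) / 2 := by ring
      _ ≤ (K:ℝ) / 2 := by linarith
      _ = (Finset.Icc 1 K).card • ((1:ℝ)/2) := by
          simp [Nat.card_Icc, nsmul_eq_mul]
          ring
      _ ≤ ∑ k ∈ Finset.Icc 1 K, (μ d {x | a i * x i ≤ Δ * ((d i : ℝ) - k)}).toReal := by
          apply Finset.card_nsmul_le_sum
          intro k hk
          exact htail i k (Finset.mem_Icc.mp hk).2
  -- upper bound on ∫ f by the expected gap
  have hae : ∀ᵐ x ∂ μ d, ∀ i, a i * x i ≤ Δ * ((d i:ℝ)) := by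
    have h0 : μ d ({x | ∀ i, a i * x i ≤ Δ * ((d i:ℝ))}ᶜ) = 0 := by
      rw [measure_compl (hSmeas d) (measure_ne_top _ _), hsupp d, measure_univ]
      simp
    rw [ae_iff]
    simp only [Set.compl_setOf] at h0
    convert h0 using 2
  have hg_int : Integrable (fun x : Fin m → ℝ => Δ * (∑ i, (d i:ℝ)/a i) - ∑ i, x i) (μ d) :=
    (integrable_const _).sub (hint d)
  have hfg : ∫ x, f x ∂ μ d ≤ ∫ x, (Δ * (∑ i, (d i:ℝ)/a i) - ∑ i, x i) ∂ μ d := by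
    apply integral_mono_ae hf_int hg_int
    filter_upwards [hae] with x hx
    have hrepr2 : Δ * (∑ i, (d i:ℝ)/a i) - ∑ i, x i = ∑ i, (Δ * ((d i:ℝ)/a i) - x i) := by
      rw [Finset.mul_sum, Finset.sum_sub_distrib]
    rw [hfdef, hrepr2]
    apply Finset.sum_le_sum
    intro i _
    have hai : a i ≠ 0 := (ha i).ne'
    have hΔ' : Δ ≠ 0 := hΔ.ne'
    have ht0 : 0 ≤ (Δ * (d i:ℝ) - a i * x i) / Δ := div_nonneg (by linarith [hx i]) hΔ.le
    have hiff : ∀ k : ℕ, (a i * x i ≤ Δ * ((d i:ℝ) - k)) ↔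
        ((k:ℝ) ≤ (Δ * (d i:ℝ) - a i * x i) / Δ) := by
      intro k
      rw [le_div_iff₀ hΔ]
      constructor <;> intro h <;> nlinarith
    calc (Δ / a i) * ∑ k ∈ Finset.Icc 1 K,
          (if a i * x i ≤ Δ * ((d i:ℝ) - k) then (1:ℝ) else 0)
        = (Δ / a i) * ∑ k ∈ Finset.Icc 1 K,
            (if (k:ℝ) ≤ (Δ * (d i:ℝ) - a i * x i) / Δ then (1:ℝ) else 0) := by
          congr 1
          exact Finset.sum_congr rfl (fun k _ => if_congr (hiff k) rfl rfl)
      _ ≤ (Δ / a i) * ((Δ * (d i:ℝ) - a i * x i) / Δ) :=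
          mul_le_mul_of_nonneg_left (aux_sum_ind_le K _ ht0) (div_nonneg hΔ.le (ha i).le)
      _ = Δ * ((d i:ℝ)/a i) - x i := by
          field_simp
  have hgval : ∫ x, (Δ * (∑ i, (d i:ℝ)/a i) - ∑ i, x i) ∂ μ d
      = Δ * (∑ i, (d i:ℝ)/a i) - ∫ x, (∑ i, x i) ∂ μ d := by
    rw [integral_sub (integrable_const _) (hint d), integral_const]
    simp
  exact le_trans hflb (le_of_le_of_eq hfg hgval)
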